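/- Let v ≥ 1, ζ > 0, and suppose B1, B2 ∈ M_v(ℂ), a column vector I ∈ M_{v×1}(ℂ) and a row vector J ∈ M_{1×v}(ℂ) satisfy the rank-one (w = 1) deformed ADHM equations [B1, B2] + I·J = 0 and [B1, B1†] + [B2, B2†] + I·I† − J†·J = 2ζ·1_V. Then J = 0; consequently [B1, B2] = 0 and I†·I = 2vζ. -/

import Mathlib

open Matrix

namespace RankOneADHM

variable {v : ℕ} (B1 B2 : Matrix (Fin v) (Fin v) ℂ)
  (I : Matrix (Fin v) (Fin 1) ℂ) (J : Matrix (Fin 1) (Fin v) ℂ)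


noncomputable def W (l : List Bool) : Matrix (Fin v) (Fin v) ℂ :=
  (l.map (fun b => bif b then B1 else B2)).prod

@[simp] lemma W_nil : W B1 B2 ([] : List Bool) = 1 := rfl

@[simp] lemma W_cons (b : Bool) (l : List Bool) :
    W B1 B2 (b :: l) = (bif b then B1 else B2) * W B1 B2 l := by
  simp [W]

@[simp] lemma W_append (l1 l2 : List Bool) :
    W B1 B2 (l1 ++ l2) = W B1 B2 l1 * W B1 B2 l2 := by
  simp [W]

lemma W_replicate_true (a : ℕ) : W B1 B2 (List.replicate a true) = B1 ^ a := by
  induction a with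
  | zero => simp
  | succ a ih => rw [List.replicate_succ, W_cons, ih, pow_succ']; rfl

lemma W_replicate_false (b : ℕ) : W B1 B2 (List.replicate b false) = B2 ^ b := by
  induction b with
  | zero => simp
  | succ a ih => rw [List.replicate_succ, W_cons, ih, pow_succ']; rfl

lemma entry_eq_trace (A : Matrix (Fin v) (Fin v) ℂ) :
    (J * A * I) 0 0 = trace (I * J * A) := by
  rw [← trace_fin_one (J * A * I), trace_mul_cycle I J A, trace_mul_cycle A I J]

noncomputable def s (l : List Bool) : ℂ := (J * W B1 B2 l * I) 0 0

lemma one_one_entry_mul (A B : Matrix (Fin 1) (Fin 1) ℂ) :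
    (A * B) 0 0 = A 0 0 * B 0 0 := by
  simp [Matrix.mul_apply]

section CommRel

variable (hIJ : I * J = B2 * B1 - B1 * B2)
include hIJ

lemma s_swap (u w : List Bool) :
    s B1 B2 I J (u ++ false :: true :: w)
      = s B1 B2 I J (u ++ true :: false :: w) + s B1 B2 I J u * s B1 B2 I J w := by
  have h21 : B2 * B1 = B1 * B2 + I * J := by rw [hIJ]; abel
  have hW : W B1 B2 (u ++ false :: true :: w)
      = W B1 B2 (u ++ true :: false :: w) + W B1 B2 u * (I * (J * W B1 B2 w)) := by
    simp only [W_append, W_cons, Bool.cond_true, Bool.cond_false]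
    rw [← mul_assoc B2 B1, h21]
    simp only [Matrix.add_mul, Matrix.mul_add, Matrix.mul_assoc]
  rw [s, hW]
  rw [Matrix.mul_add, Matrix.add_mul, Matrix.add_apply]
  congr 1
  have : J * (W B1 B2 u * (I * (J * W B1 B2 w))) * I
      = (J * W B1 B2 u * I) * (J * W B1 B2 w * I) := by
    simp only [Matrix.mul_assoc]
  rw [this, one_one_entry_mul]
  rfl

lemma s_swap' {n : ℕ} (hIH : ∀ w : List Bool, w.length < n → s B1 B2 I J w = 0)
    (u w : List Bool) (x y : Bool) (h : u.length + w.length + 2 ≤ n) :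
    s B1 B2 I J (u ++ x :: y :: w) = s B1 B2 I J (u ++ y :: x :: w) := by
  have hu : s B1 B2 I J u = 0 := hIH u (by omega)
  match x, y with
  | true, true => rfl
  | false, false => rfl
  | false, true => rw [s_swap B1 B2 I J hIJ u w, hu]; ring
  | true, false => rw [s_swap B1 B2 I J hIJ u w, hu]; ring

lemma s_perm {n : ℕ} (hIH : ∀ w : List Bool, w.length < n → s B1 B2 I J w = 0)
    {l1 l2 : List Bool} (hp : l1.Perm l2) :
    ∀ u : List Bool, u.length + l1.length ≤ n →
      s B1 B2 I J (u ++ l1) = s B1 B2 I J (u ++ l2) := by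
  induction hp with
  | nil => intro u _; rfl
  | @cons x l1' l2' h ih =>
      intro u hu
      rw [show u ++ x :: l1' = (u ++ [x]) ++ l1' by simp,
        show u ++ x :: l2' = (u ++ [x]) ++ l2' by simp,
        ih (u ++ [x]) (by simp at hu ⊢; omega)]
  | swap x y l =>
      intro u hu
      exact s_swap' B1 B2 I J hIJ hIH u l y x (by simp at hu; omega)
  | trans h1 h2 ih1 ih2 =>
      intro u hu
      rw [ih1 u hu, ih2 u (by rw [← h1.length_eq]; exact hu)]


lemma comm_pow (a : ℕ) :
    B2 * B1 ^ a - B1 ^ a * B2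
      = ∑ i ∈ Finset.range a, B1 ^ i * (I * J) * B1 ^ (a - 1 - i) := by
  induction a with
  | zero => simp
  | succ a ih =>
      have h : B2 * B1 ^ (a+1) - B1 ^ (a+1) * B2
          = (B2 * B1 ^ a - B1 ^ a * B2) * B1 + B1 ^ a * (B2 * B1 - B1 * B2) := by
        rw [pow_succ]; noncomm_ring
      rw [h, ih, ← hIJ, Finset.sum_mul, Finset.sum_range_succ]
      congr 1
      · apply Finset.sum_congr rfl
        intro i hi
        rw [Finset.mem_range] at hi
        rw [Matrix.mul_assoc, ← pow_succ]
        congr 2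
        omega
      · rw [show a + 1 - 1 - a = 0 by omega, pow_zero, Matrix.mul_one]

lemma tr_comm_helper (X : Matrix (Fin v) (Fin v) ℂ) :
    trace (I * J * X) = -trace (B1 * (B2 * X - X * B2)) := by
  rw [hIJ, Matrix.sub_mul, Matrix.mul_sub, trace_sub, trace_sub]
  rw [show B2 * B1 * X = B2 * (B1 * X) from Matrix.mul_assoc _ _ _,
    trace_mul_comm B2 (B1 * X),
    show B1 * X * B2 = B1 * (X * B2) from Matrix.mul_assoc _ _ _,
    show B1 * B2 * X = B1 * (B2 * X) from Matrix.mul_assoc _ _ _]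
  ring

lemma s_zero : ∀ l : List Bool, s B1 B2 I J l = 0 := by
  suffices H : ∀ n : ℕ, ∀ l : List Bool, l.length = n → s B1 B2 I J l = 0 by
    intro l; exact H l.length l rfl
  intro n
  induction n using Nat.strong_induction_on with
  | _ n IH =>
    intro l hl
    have hIH : ∀ w : List Bool, w.length < n → s B1 B2 I J w = 0 := by
      intro w hw; exact IH w.length (hl ▸ hw) w rfl
    set a := l.count true with ha
    set b := l.count false with hb
    have hperm : l.Perm (List.replicate a true ++ List.replicate b false) := by
      rw [List.perm_iff_count]
      intro x
      cases x <;> simp [List.count_replicate, ha, hb]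
    have hlen : a + b = n := by
      have := hperm.length_eq
      simp at this
      omega
    have hcanon : s B1 B2 I J l
        = s B1 B2 I J (List.replicate a true ++ List.replicate b false) := by
      have := s_perm B1 B2 I J hIJ hIH hperm [] (by simp [hl])
      simpa using this
    -- now compute s of the canonical word
    set t := s B1 B2 I J (List.replicate a true ++ List.replicate b false) with ht
    have key : t = -(a : ℂ) * t := by
      have e1 : t = trace (I * J * (B1 ^ a * B2 ^ b)) := by
        rw [ht, s, entry_eq_trace, W_append, W_replicate_true, W_replicate_false]
      have e2 : B2 * (B1 ^ a * B2 ^ b) - (B1 ^ a * B2 ^ b) * B2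
          = (∑ i ∈ Finset.range a, B1 ^ i * (I * J) * B1 ^ (a - 1 - i)) * B2 ^ b := by
        have : B1 ^ a * B2 ^ b * B2 = B1 ^ a * (B2 * B2 ^ b) := by
          rw [Matrix.mul_assoc, ← pow_succ, pow_succ']
        rw [← comm_pow B1 B2 I J hIJ, this]
        noncomm_ring
      have e3 : ∀ i ∈ Finset.range a,
          trace (B1 * (B1 ^ i * (I * J) * B1 ^ (a - 1 - i) * B2 ^ b)) = t := by
        intro i hi
        rw [Finset.mem_range] at hi
        have r1 : B1 * (B1 ^ i * (I * J) * B1 ^ (a - 1 - i) * B2 ^ b)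
            = B1 ^ (i + 1) * (I * J) * (B1 ^ (a - 1 - i) * B2 ^ b) := by
          rw [pow_succ']
          simp only [Matrix.mul_assoc]
        have r2 : trace (B1 ^ (i + 1) * (I * J) * (B1 ^ (a - 1 - i) * B2 ^ b))
            = trace (I * J * (B1 ^ (a - 1 - i) * B2 ^ b * B1 ^ (i + 1))) := by
          rw [trace_mul_cycle (B1 ^ (i+1)) (I * J) (B1 ^ (a - 1 - i) * B2 ^ b),
            trace_mul_cycle (B1 ^ (a - 1 - i) * B2 ^ b) (B1 ^ (i+1)) (I * J),
            Matrix.mul_assoc]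
        have r3 : trace (I * J * (B1 ^ (a - 1 - i) * B2 ^ b * B1 ^ (i + 1)))
            = s B1 B2 I J (List.replicate (a - 1 - i) true ++
                (List.replicate b false ++ List.replicate (i + 1) true)) := by
          rw [s, entry_eq_trace, W_append, W_append, W_replicate_true,
            W_replicate_false, W_replicate_true]
          simp only [Matrix.mul_assoc]
        have r4 : s B1 B2 I J (List.replicate (a - 1 - i) true ++
              (List.replicate b false ++ List.replicate (i + 1) true)) = t := by
          rw [ht]
          have hp : (List.replicate (a - 1 - i) true ++
              (List.replicate b false ++ List.replicate (i + 1) true)).Perm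
              (List.replicate a true ++ List.replicate b false) := by
            rw [List.perm_iff_count]
            intro x
            cases x <;> simp [List.count_replicate] <;> omega
          have := s_perm B1 B2 I J hIJ hIH hp [] (by simp; omega)
          simpa using this
        rw [r1, r2, r3, r4]
      calc t = trace (I * J * (B1 ^ a * B2 ^ b)) := e1
        _ = -trace (B1 * ((∑ i ∈ Finset.range a, B1 ^ i * (I * J) * B1 ^ (a - 1 - i)) * B2 ^ b)) := by
            rw [tr_comm_helper B1 B2 I J hIJ, e2]
        _ = -∑ i ∈ Finset.range a, trace (B1 * (B1 ^ i * (I * J) * B1 ^ (a - 1 - i) * B2 ^ b)) := by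
            rw [Finset.sum_mul, Matrix.mul_sum, trace_sum]
        _ = -∑ i ∈ Finset.range a, t := by rw [Finset.sum_congr rfl e3]
        _ = -(a : ℂ) * t := by
            rw [Finset.sum_const, Finset.card_range]
            simp [mul_comm]
    have : (1 + (a : ℂ)) * t = 0 := by
      have := key
      ring_nf at this ⊢
      linear_combination this
    rw [hcanon]
    rcases mul_eq_zero.1 this with h | h
    · exact absurd h (by
        have : ((1 + a : ℕ) : ℂ) ≠ 0 := Nat.cast_ne_zero.2 (by omega)
        push_cast at this
        simpa [add_comm] using this)
    · exact h



end CommRel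

lemma ext_of_mulVec {M N : Matrix (Fin v) (Fin v) ℂ}
    (h : ∀ x : Fin v → ℂ, M *ᵥ x = N *ᵥ x) : M = N := by
  ext i j
  have := congrFun (h (Pi.single j 1)) i
  simpa using this

lemma exists_proj_matrix (S : Submodule ℂ (EuclideanSpace ℂ (Fin v))) :
    ∃ P : Matrix (Fin v) (Fin v) ℂ, Pᴴ = P ∧ P * P = P ∧
      (∀ x : EuclideanSpace ℂ (Fin v), x ∈ S → P *ᵥ x = 0) ∧
      (∀ x : EuclideanSpace ℂ (Fin v),
        Sub.sub (α := EuclideanSpace ℂ (Fin v)) x (WithLp.toLp 2 (P *ᵥ x)) ∈ S) := by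
  classical
  let f : EuclideanSpace ℂ (Fin v) →ₗ[ℂ] EuclideanSpace ℂ (Fin v) :=
    (Sᗮ.subtypeL.comp (Submodule.orthogonalProjectionOnto Sᗮ)).toLinearMap
  have hfdef : ∀ x : EuclideanSpace ℂ (Fin v),
      f x = (↑(Submodule.orthogonalProjectionOnto Sᗮ x) : EuclideanSpace ℂ (Fin v)) := fun _ => rfl
  set P : Matrix (Fin v) (Fin v) ℂ :=
    LinearMap.toMatrix' ((WithLp.linearEquiv 2 ℂ (Fin v → ℂ)).toLinearMap ∘ₗ f ∘ₗ
      (WithLp.linearEquiv 2 ℂ (Fin v → ℂ)).symm.toLinearMap) with hP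
  have hmv : ∀ x : Fin v → ℂ, P *ᵥ x = (f (WithLp.toLp 2 x)).ofLp := by
    intro x
    rw [← Matrix.toLin'_apply, hP, Matrix.toLin'_toMatrix']
    rfl
  have hfmem : ∀ x : EuclideanSpace ℂ (Fin v), f x ∈ Sᗮ := fun x =>
    (Submodule.orthogonalProjectionOnto Sᗮ x).2
  have hfid : ∀ x : EuclideanSpace ℂ (Fin v), x ∈ Sᗮ → f x = x := by
    intro x hx
    exact Submodule.starProjection_eq_self_iff.2 hx
  have hPij : ∀ i j : Fin v, P i j = f (EuclideanSpace.single j (1:ℂ)) i := by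
    intro i j
    rw [hP, LinearMap.toMatrix'_apply]
    have e : (fun j' => if j' = j then (1:ℂ) else 0)
        = (EuclideanSpace.single j (1:ℂ) : EuclideanSpace ℂ (Fin v)) := by
      funext k
      simp [EuclideanSpace.single_apply]
    rfl
  have key : ∀ (y : EuclideanSpace ℂ (Fin v)) (k : Fin v),
      f y k = inner (𝕜 := ℂ) (EuclideanSpace.single k (1:ℂ)) (f y) := by
    intro y k
    rw [EuclideanSpace.inner_single_left]
    simp
  refine ⟨P, ?_, ?_, ?_, ?_⟩
  · ext i j
    rw [conjTranspose_apply, hPij, hPij]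
    calc star (f (EuclideanSpace.single i (1:ℂ)) j)
        = (starRingEnd ℂ) (inner (𝕜 := ℂ) (EuclideanSpace.single j (1:ℂ))
            (f (EuclideanSpace.single i (1:ℂ)))) := by rw [key]; rfl
      _ = inner (𝕜 := ℂ) (f (EuclideanSpace.single i (1:ℂ)))
            (EuclideanSpace.single j (1:ℂ)) := inner_conj_symm _ _
      _ = inner (𝕜 := ℂ) (EuclideanSpace.single i (1:ℂ))
            (f (EuclideanSpace.single j (1:ℂ))) :=
          Submodule.inner_starProjection_left_eq_right Sᗮ _ _
      _ = f (EuclideanSpace.single j (1:ℂ)) i := (key _ _).symm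
  · apply ext_of_mulVec
    intro x
    rw [← Matrix.mulVec_mulVec, hmv, hmv]
    simp only [WithLp.toLp_ofLp]
    rw [hfid _ (hfmem _)]
  · intro x hx
    rw [hmv, WithLp.toLp_ofLp, hfdef,
      Submodule.orthogonalProjectionOnto_apply_of_mem_orthogonal
        (S.le_orthogonal_orthogonal hx)]
    simp
  · intro x
    have h := Submodule.sub_starProjection_mem_orthogonal (K := Sᗮ) x
    rw [Submodule.orthogonal_orthogonal] at h
    have e : Sub.sub (α := EuclideanSpace ℂ (Fin v)) x (WithLp.toLp 2 (P *ᵥ x))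
        = x - (↑(Submodule.orthogonalProjectionOnto Sᗮ x) : EuclideanSpace ℂ (Fin v)) := by
      rw [hmv]
      simp only [WithLp.toLp_ofLp]
      rw [hfdef]
      rfl
    rw [e]
    exact h


lemma trace_conjTranspose_mul (m n : Type*) [Fintype m] [Fintype n]
    (M : Matrix m n ℂ) :
    trace (Mᴴ * M) = ((∑ j : n, ∑ i : m, Complex.normSq (M i j) : ℝ) : ℂ) := by
  rw [Matrix.trace]
  push_cast
  apply Finset.sum_congr rfl
  intro j _
  rw [Matrix.diag_apply, Matrix.mul_apply]
  apply Finset.sum_congr rfl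
  intro i _
  rw [Matrix.conjTranspose_apply]
  rw [Complex.normSq_eq_conj_mul_self]
  rfl

lemma key_comm_trace {v : ℕ} (P B : Matrix (Fin v) (Fin v) ℂ)
    (hPH : Pᴴ = P) (hP2 : P * P = P) (hPB : P * B = P * B * P) :
    trace ((B * Bᴴ - Bᴴ * B) * P)
      = -trace ((B * P - P * B)ᴴ * (B * P - P * B)) := by
  have hBP : Bᴴ * P = P * Bᴴ * P := by
    have := congrArg conjTranspose hPB
    simpa [conjTranspose_mul, hPH, Matrix.mul_assoc] using this
  have h1 : (B * P - P * B)ᴴ = P * Bᴴ - Bᴴ * P := by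
    simp [conjTranspose_mul, hPH]
  rw [h1]
  simp only [Matrix.sub_mul, Matrix.mul_sub, trace_sub]
  -- t0 : trace (P * Bᴴ * (B * P)) = trace (Bᴴ * B * P)
  have t0 : trace (P * Bᴴ * (B * P)) = trace (Bᴴ * B * P) := by
    rw [show P * Bᴴ * (B * P) = P * Bᴴ * B * P by noncomm_ring,
      trace_mul_comm (P * Bᴴ * B) P,
      show P * (P * Bᴴ * B) = P * P * (Bᴴ * B) by noncomm_ring, hP2,
      trace_mul_comm P (Bᴴ * B), Matrix.mul_assoc]
  have t1 : trace (P * Bᴴ * (P * B)) = trace (B * Bᴴ * P) := by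
    rw [show P * Bᴴ * (P * B) = (P * Bᴴ * P) * B by noncomm_ring, ← hBP,
      trace_mul_comm, Matrix.mul_assoc]
  have t2 : trace (Bᴴ * P * (B * P)) = trace (B * Bᴴ * P) := by
    rw [show Bᴴ * P * (B * P) = (Bᴴ * P * B) * P by noncomm_ring,
      trace_mul_comm (Bᴴ * P * B) P,
      show P * (Bᴴ * P * B) = (P * Bᴴ * P) * B by noncomm_ring, ← hBP,
      trace_mul_comm, Matrix.mul_assoc]
  have t3 : trace (Bᴴ * P * (P * B)) = trace (B * Bᴴ * P) := by
    rw [show Bᴴ * P * (P * B) = Bᴴ * (P * P) * B by noncomm_ring, hP2,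
      trace_mul_cycle Bᴴ P B]
  rw [t0, t1, t2, t3]
  ring


end RankOneADHM

open RankOneADHM

set_option maxHeartbeats 1000000 in
/-- (Nakajima) For `w = 1` deformed ADHM data with `ζ > 0`, necessarily `J = 0`;
consequently `[B₁,B₂] = 0` and `I†·I = 2vζ`. -/
theorem rank_one_adhm_J_eq_zero
    (v : ℕ) (hv : 1 ≤ v) (ζ : ℝ) (hζ : 0 < ζ)
    (B1 B2 : Matrix (Fin v) (Fin v) ℂ)
    (I : Matrix (Fin v) (Fin 1) ℂ) (J : Matrix (Fin 1) (Fin v) ℂ)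
    (hC : (B1 * B2 - B2 * B1) + I * J = 0)
    (hR : (B1 * B1ᴴ - B1ᴴ * B1) + (B2 * B2ᴴ - B2ᴴ * B2) + I * Iᴴ - Jᴴ * J
        = (2 * ζ : ℂ) • (1 : Matrix (Fin v) (Fin v) ℂ)) :
    J = 0 ∧ B1 * B2 = B2 * B1 ∧
      Iᴴ * I = ((2 * v * ζ : ℝ) : ℂ) • (1 : Matrix (Fin 1) (Fin 1) ℂ) := by
  classical
  have hIJ : I * J = B2 * B1 - B1 * B2 := by
    have h := hC
    rw [add_comm, add_eq_zero_iff_eq_neg] at h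
    rw [h]; abel
  -- all `J * w * I` vanish
  have hJWI : ∀ l : List Bool, J * W B1 B2 l * I = 0 := by
    intro l
    ext i j
    fin_cases i; fin_cases j
    exact s_zero B1 B2 I J hIJ l
  -- the invariant subspace
  set Ic : EuclideanSpace ℂ (Fin v) := WithLp.toLp 2 (fun i => I i 0) with hIc
  set S : Submodule ℂ (EuclideanSpace ℂ (Fin v)) :=
    Submodule.span ℂ (Set.range fun l : List Bool =>
      (WithLp.toLp 2 (W B1 B2 l *ᵥ Ic) : EuclideanSpace ℂ (Fin v))) with hS
  have hIcS : Ic ∈ S := by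
    apply Submodule.subset_span
    exact ⟨[], by simp only [W_nil, Matrix.one_mulVec, WithLp.toLp_ofLp]⟩
  have hBS : ∀ (b : Bool) (x : EuclideanSpace ℂ (Fin v)), x ∈ S →
      (WithLp.toLp 2 ((bif b then B1 else B2) *ᵥ x) : EuclideanSpace ℂ (Fin v)) ∈ S := by
    intro b x hx
    induction hx using Submodule.span_induction with
    | mem x h =>
        obtain ⟨l, rfl⟩ := h
        apply Submodule.subset_span
        exact ⟨b :: l, by simp only [W_cons, Matrix.mulVec_mulVec, WithLp.ofLp_toLp]⟩
    | zero =>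
        rw [WithLp.ofLp_zero, Matrix.mulVec_zero, WithLp.toLp_zero]
        exact S.zero_mem
    | add x y hx hy ihx ihy =>
        rw [WithLp.ofLp_add, Matrix.mulVec_add, WithLp.toLp_add]
        exact S.add_mem ihx ihy
    | smul a x hx ih =>
        rw [WithLp.ofLp_smul, Matrix.mulVec_smul, WithLp.toLp_smul]
        exact S.smul_mem a ih
  have hJx : ∀ x : EuclideanSpace ℂ (Fin v), x ∈ S → J *ᵥ (x : Fin v → ℂ) = 0 := by
    intro x hx
    induction hx using Submodule.span_induction with
    | mem x h =>
        obtain ⟨l, rfl⟩ := h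
        rw [WithLp.ofLp_toLp, Matrix.mulVec_mulVec]
        funext j
        have : ((J * W B1 B2 l) *ᵥ Ic) j = (J * W B1 B2 l * I) j 0 := by
          simp [Matrix.mulVec, Matrix.mul_apply, dotProduct, hIc]
        rw [this, hJWI l]
        rfl
    | zero => exact Matrix.mulVec_zero _
    | add x y hx hy ihx ihy =>
        rw [WithLp.ofLp_add, Matrix.mulVec_add,
          ihx, ihy, add_zero]
    | smul a x hx ih =>
        rw [WithLp.ofLp_smul, Matrix.mulVec_smul,
          ih, smul_zero]
  obtain ⟨P, hPH, hP2, hker, hsub⟩ := exists_proj_matrix S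
  have hsub' : ∀ x : Fin v → ℂ,
      (WithLp.toLp 2 (x - P *ᵥ x) : EuclideanSpace ℂ (Fin v)) ∈ S := fun x => hsub (WithLp.toLp 2 x)
  -- P * I = 0
  have hPI : P * I = 0 := by
    ext i j
    have hj : j = 0 := Subsingleton.elim j 0
    subst hj
    have h0 : P *ᵥ Ic = 0 := hker Ic hIcS
    have : (P * I) i 0 = (P *ᵥ Ic) i := by
      simp [Matrix.mulVec, Matrix.mul_apply, dotProduct, hIc]
    rw [Matrix.zero_apply, this, h0]
    rfl
  -- J * P = J
  have hJP : J * P = J := by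
    ext a k
    have h0 := hJx _ (hsub' (Pi.single k 1))
    rw [WithLp.ofLp_toLp, Matrix.mulVec_sub, Matrix.mulVec_mulVec] at h0
    have := congrFun h0 a
    simp only [Pi.sub_apply, Matrix.mulVec_single, mul_one, Pi.zero_apply, MulOpposite.op_one, one_smul,
      Matrix.col_apply] at this
    exact (sub_eq_zero.1 this).symm
  -- P * B = P * B * P
  have hPB : ∀ b : Bool, P * (bif b then B1 else B2) = P * (bif b then B1 else B2) * P := by
    intro b
    apply ext_of_mulVec
    intro x
    set B := bif b then B1 else B2 with hB
    have h1 : P *ᵥ (B *ᵥ (x - P *ᵥ x)) = 0 := hker _ (hBS b _ (hsub' x))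
    rw [Matrix.mulVec_sub, Matrix.mulVec_sub, sub_eq_zero] at h1
    rw [← Matrix.mulVec_mulVec, ← Matrix.mulVec_mulVec, ← Matrix.mulVec_mulVec]
    exact h1
  have hPB1 : P * B1 = P * B1 * P := hPB true
  have hPB2 : P * B2 = P * B2 * P := hPB false
  -- trace bookkeeping
  have e1 := key_comm_trace P B1 hPH hP2 hPB1
  have e2 := key_comm_trace P B2 hPH hP2 hPB2
  have eI : trace (I * Iᴴ * P) = 0 := by
    rw [Matrix.mul_assoc, trace_mul_comm I (Iᴴ * P), Matrix.mul_assoc, hPI,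
      Matrix.mul_zero, trace_zero]
  have eJ : trace (Jᴴ * J * P) = trace (Jᴴ * J) := by
    rw [Matrix.mul_assoc, hJP]
  have etr := congrArg (fun M => trace (M * P)) hR
  beta_reduce at etr
  rw [Matrix.sub_mul, Matrix.add_mul, Matrix.add_mul, trace_sub, trace_add, trace_add,
    e1, e2, eI, eJ, Matrix.smul_mul, Matrix.one_mul, trace_smul, smul_eq_mul] at etr
  have hPtr : trace P = trace (Pᴴ * P) := by
    conv_lhs => rw [← hP2]
    nth_rewrite 1 [← hPH]
    rfl
  set r1 : ℝ := ∑ j : Fin v, ∑ i : Fin v, Complex.normSq ((B1 * P - P * B1) i j) with hr1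
  set r2 : ℝ := ∑ j : Fin v, ∑ i : Fin v, Complex.normSq ((B2 * P - P * B2) i j) with hr2
  set rJ : ℝ := ∑ j : Fin v, ∑ i : Fin 1, Complex.normSq (J i j) with hrJdef
  set rP : ℝ := ∑ j : Fin v, ∑ i : Fin v, Complex.normSq (P i j) with hrP
  have c1 := trace_conjTranspose_mul (Fin v) (Fin v) (B1 * P - P * B1)
  have c2 := trace_conjTranspose_mul (Fin v) (Fin v) (B2 * P - P * B2)
  have cJ := trace_conjTranspose_mul (Fin 1) (Fin v) J
  have cP := trace_conjTranspose_mul (Fin v) (Fin v) P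
  rw [c1, c2, cJ, hPtr, cP, ← hr1, ← hr2, ← hrJdef, ← hrP] at etr
  have hcast : ((-r1 - r2 - rJ : ℝ) : ℂ) = ((2 * ζ * rP : ℝ) : ℂ) := by
    push_cast
    linear_combination etr
  have hreal : -r1 - r2 - rJ = 2 * ζ * rP := Complex.ofReal_injective hcast
  have hnn : ∀ (m n : ℕ) (M : Matrix (Fin m) (Fin n) ℂ),
      (0:ℝ) ≤ ∑ j : Fin n, ∑ i : Fin m, Complex.normSq (M i j) :=
    fun m n M => Finset.sum_nonneg fun j _ =>
      Finset.sum_nonneg fun i _ => Complex.normSq_nonneg _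
  have h1nn : 0 ≤ r1 := hnn _ _ _
  have h2nn : 0 ≤ r2 := hnn _ _ _
  have hJnn : 0 ≤ rJ := hnn _ _ _
  have hPnn : 0 ≤ rP := hnn _ _ _
  have hrJ0 : rJ = 0 := by nlinarith
  have hJzero : J = 0 := by
    ext i j
    have hle : Complex.normSq (J i j) ≤ rJ := by
      rw [hrJdef]
      calc Complex.normSq (J i j) ≤ ∑ i' : Fin 1, Complex.normSq (J i' j) :=
            Finset.single_le_sum (f := fun i' => Complex.normSq (J i' j))
              (fun _ _ => Complex.normSq_nonneg _) (Finset.mem_univ i)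
        _ ≤ ∑ j' : Fin v, ∑ i' : Fin 1, Complex.normSq (J i' j') :=
            Finset.single_le_sum (f := fun j' => ∑ i' : Fin 1, Complex.normSq (J i' j'))
              (fun _ _ => Finset.sum_nonneg fun _ _ => Complex.normSq_nonneg _)
              (Finset.mem_univ j)
    have h0 : Complex.normSq (J i j) = 0 :=
      le_antisymm (hrJ0 ▸ hle) (Complex.normSq_nonneg _)
    simpa using Complex.normSq_eq_zero.1 h0
  refine ⟨hJzero, ?_, ?_⟩
  · have h := hC
    rw [hJzero, Matrix.mul_zero, add_zero, sub_eq_zero] at h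
    exact h
  · have h := hR
    rw [hJzero] at h
    have htr := congrArg trace h
    simp only [conjTranspose_zero, Matrix.mul_zero, Matrix.zero_mul, sub_zero, trace_add,
      trace_sub, trace_smul, trace_one, smul_eq_mul, Fintype.card_fin] at htr
    rw [trace_mul_comm B1 B1ᴴ, trace_mul_comm B2 B2ᴴ] at htr
    have hII : trace (I * Iᴴ) = (2 * (ζ:ℂ)) * (v : ℂ) := by linear_combination htr
    ext i j
    have hi : i = 0 := Subsingleton.elim i 0
    have hj : j = 0 := Subsingleton.elim j 0
    subst hi; subst hj
    have hentry : (Iᴴ * I) 0 0 = trace (Iᴴ * I) := (trace_fin_one _).symm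
    rw [hentry, trace_mul_comm Iᴴ I, hII, Matrix.smul_apply, Matrix.one_apply_eq,
      smul_eq_mul, mul_one]
    push_cast
    ring
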